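/- arXiv:2012.11467 — 2 statements merged into one kernel-verified Lean document; each statement's English description precedes it below -/
import Mathlib

section
/- Fix δ ∈ (0,1/3) and an integer r ≥ 1. For every ε > 0 there exists A < ∞ (depending only on δ, r, ε) such that for all reals a ≤ −A, every integer T with r ≤ T < ∞, every b ∈ ℝ satisfying |b − a|·r/T ≤ (a⁻ + 1)^{1−δ}, and every δ-decorated random walk bridge (S_k)_{k=0}^T, (D_k)_{k=1}^T from a to b of length T, one has | ℓ_{T,r}(a,b)/a⁻ − 1 | ≤ ε. -/
open MeasureTheory ProbabilityTheory

noncomputable section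

/-- The negative part `x⁻ = max (-x) 0` of a real number. -/
def nneg (x : ℝ) : ℝ := max (-x) 0

/-- Partial sums `s j = σ²₁ + ⋯ + σ²ⱼ` of the step variances. -/
def psum (σsq : ℕ → ℝ) (j : ℕ) : ℝ := ∑ i ∈ Finset.Icc 1 j, σsq i

/-- A `δ`-decorated random walk bridge from `a` to `b` of length `T` on `(Ω, P)`:
step variances `σsq k ∈ (δ, δ⁻¹)`; `(S k)` a Gaussian process with the bridge mean and
covariance structure (A1); the Markov-type conditional independence property (A2); and the
stretched-exponential decoration tails (A3). -/
structure DecoratedBridge (δ : ℝ) (T : ℕ) (a b : ℝ)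
    {Ω : Type*} [MeasurableSpace Ω] (P : Measure Ω) where
  σsq : ℕ → ℝ
  S : ℕ → Ω → ℝ
  D : ℕ → Ω → ℝ
  meas_S : ∀ k, Measurable (S k)
  meas_D : ∀ k, Measurable (D k)
  σsq_mem : ∀ k, 1 ≤ k → k ≤ T → σsq k ∈ Set.Ioo δ δ⁻¹
  gaussian_lin : ∀ c : ℕ → ℝ, ∃ (m : ℝ) (v : NNReal),
    P.map (fun ω => ∑ k ∈ Finset.range (T + 1), c k * S k ω) = gaussianReal m v
  mean_S : ∀ k, k ≤ T →
    ∫ ω, S k ω ∂P = (b * psum σsq k + a * (psum σsq T - psum σsq k)) / psum σsq T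
  cov_S : ∀ k m, k ≤ m → m ≤ T →
    ∫ ω, (S k ω - ∫ ω', S k ω' ∂P) * (S m ω - ∫ ω', S m ω' ∂P) ∂P
      = psum σsq k * (psum σsq T - psum σsq m) / psum σsq T
  condIndep : ∀ m, 1 ≤ m → m ≤ T - 1 → ∀ A B : Set Ω,
    MeasurableSet[MeasurableSpace.comap
      (fun ω => fun k : Finset.Icc 1 m => (S k.1 ω, D k.1 ω)) inferInstance] A →
    MeasurableSet[MeasurableSpace.comap
      (fun ω => fun k : Set.Ioc m T => S k.1 ω) inferInstance] B →
    MeasureTheory.condExp (MeasurableSpace.comap (S m) inferInstance) P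
        ((A ∩ B).indicator fun _ => (1 : ℝ))
      =ᵐ[P] fun ω =>
        MeasureTheory.condExp (MeasurableSpace.comap (S m) inferInstance) P
          (A.indicator fun _ => (1 : ℝ)) ω *
        MeasureTheory.condExp (MeasurableSpace.comap (S m) inferInstance) P
          (B.indicator fun _ => (1 : ℝ)) ω
  dec_tail : ∀ k, 1 ≤ k → k ≤ T → ∀ t : ℝ, 0 < t →
    (P {ω | δ⁻¹ * ((min k (T - k) : ℕ) : ℝ) ^ ((1 : ℝ) / 2 - δ) + t < |D k ω|}).toReal
      ≤ δ⁻¹ * Real.exp (-t ^ δ)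


/-- The functional `ℓ_{T,r}(a,b) = E[ S_r⁻ · 1{ max_{1 ≤ k ≤ r}(S_k + D_k) ≤ 0 } ]`. -/
def DecoratedBridge.ell {δ : ℝ} {T : ℕ} {a b : ℝ} {Ω : Type*} [MeasurableSpace Ω]
    {P : Measure Ω} (B : DecoratedBridge δ T a b P) (r : ℕ) : ℝ :=
  ∫ ω, nneg (B.S r ω) *
    Set.indicator {ω' | ∀ k, 1 ≤ k → k ≤ r → B.S k ω' + B.D k ω' ≤ 0} (fun _ => (1 : ℝ)) ω ∂P

section Aux
open Real Filter

-- ## auxiliary lemmas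

lemma integrable_sq_gaussAux {b : ℝ} (hb : 0 < b) :
    Integrable (fun x : ℝ => x ^ 2 * Real.exp (-b * x ^ 2)) := by
  have := integrable_rpow_mul_exp_neg_mul_sq hb (s := 2) (by norm_num)
  simpa [Real.rpow_natCast] using this

lemma integrable_sq_gaussianReal (μ : ℝ) (v : NNReal) :
    Integrable (fun x => x ^ 2) (gaussianReal μ v) := by
  by_cases hv : v = 0
  · subst hv
    simp only [gaussianReal_zero_var]
    exact (integrable_const _).congr (ae_eq_dirac (fun x : ℝ => x ^ 2)).symm
  · rw [gaussianReal_of_var_ne_zero _ hv]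
    rw [integrable_withDensity_iff (measurable_gaussianPDF _ _)
      (ae_of_all _ fun x => ENNReal.ofReal_lt_top)]
    have hb : 0 < (2 * (v : ℝ))⁻¹ := by positivity
    have h2 := integrable_sq_gaussAux hb
    have h1 := integrable_mul_exp_neg_mul_sq hb
    have h0 := integrable_exp_neg_mul_sq hb
    have hg : Integrable (fun y : ℝ =>
        y ^ 2 * Real.exp (-(2 * (v : ℝ))⁻¹ * y ^ 2)
        + (2 * μ) * (y * Real.exp (-(2 * (v : ℝ))⁻¹ * y ^ 2))
        + μ ^ 2 * Real.exp (-(2 * (v : ℝ))⁻¹ * y ^ 2)) :=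
      (h2.add (h1.const_mul (2 * μ))).add (h0.const_mul (μ ^ 2))
    have hcomp := (hg.comp_sub_right μ).const_mul (√(2 * π * (v : ℝ)))⁻¹
    refine hcomp.congr (ae_of_all _ fun x => ?_)
    beta_reduce
    show _ = x ^ 2 * (gaussianPDF μ v x).toReal
    rw [gaussianPDF_def, ENNReal.toReal_ofReal (gaussianPDFReal_nonneg _ _ _),
      gaussianPDFReal_def]
    beta_reduce
    rw [show -(x - μ) ^ 2 / (2 * (v : ℝ)) = -(2 * (v : ℝ))⁻¹ * (x - μ) ^ 2 by ring]
    ring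

lemma abs_le_sq_add_one (x : ℝ) : |x| ≤ x ^ 2 + 1 := by
  nlinarith [sq_nonneg (|x| - 1), sq_abs x, abs_nonneg x]

lemma integrable_sq_of_map_gaussian {Ω : Type} [MeasurableSpace Ω] {P : Measure Ω}
    {X : Ω → ℝ} (hX : Measurable X) {m : ℝ} {v : NNReal}
    (hmap : P.map X = gaussianReal m v) :
    Integrable (fun ω => X ω ^ 2) P := by
  have h : Integrable (fun x => x ^ 2) (P.map X) := by
    rw [hmap]; exact integrable_sq_gaussianReal m v
  exact (integrable_map_measure (by fun_prop) hX.aemeasurable).mp h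

lemma integrable_of_map_gaussian {Ω : Type} [MeasurableSpace Ω] {P : Measure Ω}
    [IsProbabilityMeasure P]
    {X : Ω → ℝ} (hX : Measurable X) {m : ℝ} {v : NNReal}
    (hmap : P.map X = gaussianReal m v) :
    Integrable X P := by
  refine Integrable.mono' ((integrable_sq_of_map_gaussian hX hmap).add
    (integrable_const 1)) hX.aestronglyMeasurable (ae_of_all _ fun ω => ?_)
  exact abs_le_sq_add_one (X ω)

lemma integrable_sq_sub_of_map_gaussian {Ω : Type} [MeasurableSpace Ω] {P : Measure Ω}
    [IsProbabilityMeasure P]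
    {X : Ω → ℝ} (hX : Measurable X) {m : ℝ} {v : NNReal}
    (hmap : P.map X = gaussianReal m v) (c : ℝ) :
    Integrable (fun ω => (X ω - c) ^ 2) P := by
  have h := ((integrable_sq_of_map_gaussian hX hmap).sub
    ((integrable_of_map_gaussian hX hmap).const_mul (2 * c))).add (integrable_const (c ^ 2))
  refine h.congr (ae_of_all _ fun ω => ?_)
  simp only [Pi.add_apply, Pi.sub_apply]
  ring

lemma tendsto_aux (δ : ℝ) (hδ : 0 < δ) :
    Tendsto (fun m : ℝ => (m + 1) ^ (1 - δ) / m) atTop (nhds 0) := by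
  have h1 : Tendsto (fun m : ℝ => (m + 1) ^ (-δ)) atTop (nhds 0) :=
    (tendsto_rpow_neg_atTop hδ).comp (tendsto_atTop_add_const_right _ 1 tendsto_id)
  have h2 : Tendsto (fun m : ℝ => 1 + m⁻¹) atTop (nhds (1 + 0)) :=
    tendsto_const_nhds.add tendsto_inv_atTop_zero
  have h3 := h1.mul h2
  rw [zero_mul] at h3
  refine h3.congr' ?_
  filter_upwards [eventually_ge_atTop (1 : ℝ)] with m hm
  have hm0 : (0 : ℝ) < m := by linarith
  have hm1 : (0 : ℝ) < m + 1 := by linarith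
  have : (m + 1) ^ (-δ) * (m + 1) = (m + 1) ^ (1 - δ) := by
    rw [show (1 : ℝ) - δ = -δ + 1 by ring, Real.rpow_add hm1, Real.rpow_one]
  rw [show (1 : ℝ) + m⁻¹ = (m + 1) / m by field_simp]
  rw [mul_div_assoc', this]

lemma chooser (δ : ℝ) (hδ : 0 < δ) (c1 c2 c3 c4 c5 c6 ε : ℝ) (hε : 0 < ε) :
    ∃ A : ℝ, ∀ m : ℝ, A ≤ m →
      1 ≤ m ∧ c1 ≤ m ∧ c2 * (m + 1) ^ (1 - δ) ≤ m / 4 ∧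
      2 * (c3 + c4 * (m + 1) ^ (1 - δ)) / m ≤ ε ∧ c5 / m ^ 2 ≤ ε ∧
      c6 * Real.exp (-(m / 4) ^ δ) ≤ ε := by
  have T0 := tendsto_aux δ hδ
  have T3 : Tendsto (fun m : ℝ => c2 * (m + 1) ^ (1 - δ) / m) atTop (nhds 0) := by
    have := T0.const_mul c2
    rw [mul_zero] at this
    refine this.congr fun m => by ring
  have e3 : ∀ᶠ m : ℝ in atTop, 1 ≤ m → c2 * (m + 1) ^ (1 - δ) ≤ m / 4 := by
    filter_upwards [T3.eventually (eventually_le_nhds (by norm_num : (0:ℝ) < 1/4))] with m hm hm1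
    have hm0 : (0 : ℝ) < m := by linarith
    rw [div_le_iff₀ hm0] at hm
    linarith
  have T4 : Tendsto (fun m : ℝ => 2 * (c3 + c4 * (m + 1) ^ (1 - δ)) / m) atTop (nhds 0) := by
    have h := ((tendsto_inv_atTop_zero.const_mul (2 * c3)).add (T0.const_mul (2 * c4)))
    rw [mul_zero, mul_zero, add_zero] at h
    refine h.congr' ?_
    filter_upwards [eventually_ge_atTop (1 : ℝ)] with m hm
    have hm0 : m ≠ 0 := by positivity
    field_simp
  have e4 := T4.eventually (eventually_le_nhds hε)
  have T5 : Tendsto (fun m : ℝ => c5 / m ^ 2) atTop (nhds 0) := by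
    have h := ((tendsto_pow_atTop (two_ne_zero)).inv_tendsto_atTop
      (l := atTop) (f := fun m : ℝ => m ^ 2)).const_mul c5
    rw [mul_zero] at h
    exact h.congr fun m => by rw [Pi.inv_apply, div_eq_mul_inv]
  have e5 := T5.eventually (eventually_le_nhds hε)
  have T6 : Tendsto (fun m : ℝ => c6 * Real.exp (-(m / 4) ^ δ)) atTop (nhds 0) := by
    have harg : Tendsto (fun m : ℝ => (m / 4) ^ δ) atTop atTop :=
      (tendsto_rpow_atTop hδ).comp (tendsto_id.atTop_div_const (by norm_num))
    have h := (Real.tendsto_exp_atBot.comp (tendsto_neg_atTop_atBot.comp harg)).const_mul c6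
    rw [mul_zero] at h
    exact h
  have e6 := T6.eventually (eventually_le_nhds hε)
  have hall := (((((eventually_ge_atTop (1:ℝ)).and (eventually_ge_atTop c1)).and e3).and
    e4).and e5).and e6
  obtain ⟨A, hA⟩ := eventually_atTop.mp hall
  refine ⟨A, fun m hm => ?_⟩
  obtain ⟨⟨⟨⟨⟨h1, h2⟩, h3⟩, h4⟩, h5⟩, h6⟩ := hA m hm
  exact ⟨h1, h2, h3 h1, h4, h5, h6⟩


end Aux

set_option maxHeartbeats 2000000 in
/-- for a fixed number of steps `r`, `ℓ_{T,r}(a,b) ∼ a⁻` as `a → −∞`. -/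
theorem drw_ell_asymp (δ : ℝ) (hδ : δ ∈ Set.Ioo (0 : ℝ) (1 / 3)) (r : ℕ) (hr : 1 ≤ r) :
    ∀ ε : ℝ, 0 < ε → ∃ A : ℝ,
      ∀ a : ℝ, a ≤ -A → ∀ T : ℕ, r ≤ T → ∀ b : ℝ,
        |b - a| * r / T ≤ (nneg a + 1) ^ (1 - δ) →
      ∀ (Ω : Type) [MeasurableSpace Ω] (P : Measure Ω) [IsProbabilityMeasure P]
        (B : DecoratedBridge δ T a b P),
      |B.ell r / nneg a - 1| ≤ ε := by
  intro ε hε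
  obtain ⟨hδ0, hδ3⟩ := hδ
  have hδi : (0:ℝ) < δ⁻¹ := by positivity
  have hr0 : (0:ℝ) < r := by exact_mod_cast hr
  obtain ⟨K, hK⟩ : ∃ x : ℝ, x = δ⁻¹ * δ⁻¹ := ⟨_, rfl⟩
  obtain ⟨V, hV⟩ : ∃ x : ℝ, x = δ⁻¹ * (r:ℝ) := ⟨_, rfl⟩
  have hK0 : 0 < K := by rw [hK]; positivity
  have hV0 : 0 < V := by rw [hV]; positivity
  obtain ⟨A, hA⟩ := chooser δ hδ0 (4 * (δ⁻¹ * r + 1)) K V (K * K + 1) (r * (16 * V)) (r * δ⁻¹)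
    (ε / 3) (by linarith)
  refine ⟨A, fun a ha T hT b hb Ω _ P _ B => ?_⟩
  obtain ⟨m, hm_def⟩ : ∃ x : ℝ, x = -a := ⟨_, rfl⟩
  have hAm : A ≤ m := by rw [hm_def]; linarith
  obtain ⟨h1, h2, h3, h4, h5, h6⟩ := hA m hAm
  have hm0 : (0:ℝ) < m := by linarith
  have ha0 : a < 0 := by rw [show a = -m by rw [hm_def]; ring]; linarith
  have hnneg_a : nneg a = m := by
    rw [nneg, hm_def]; exact max_eq_left (by linarith)
  have ham : a = -m := by rw [hm_def]; ring
  rw [hnneg_a] at hb ⊢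
  have hT1 : 1 ≤ T := le_trans hr hT
  have hT0 : (0:ℝ) < T := by exact_mod_cast hT1
  -- partial sum facts
  have hs_le : ∀ k, k ≤ T → psum B.σsq k ≤ δ⁻¹ * k := by
    intro k hk
    have h := Finset.sum_le_sum (s := Finset.Icc 1 k) (g := fun _ => δ⁻¹)
      (fun i hi => le_of_lt (B.σsq_mem i (Finset.mem_Icc.mp hi).1
        (le_trans (Finset.mem_Icc.mp hi).2 hk)).2)
    simpa [psum, Finset.sum_const, Nat.card_Icc, nsmul_eq_mul, mul_comm] using h
  have hs_geT : δ * T ≤ psum B.σsq T := by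
    have h := Finset.sum_le_sum (s := Finset.Icc 1 T) (f := fun _ => δ)
      (fun i hi => le_of_lt (B.σsq_mem i (Finset.mem_Icc.mp hi).1 (Finset.mem_Icc.mp hi).2).1)
    simpa [psum, Finset.sum_const, Nat.card_Icc, nsmul_eq_mul, mul_comm] using h
  have hs_posT : 0 < psum B.σsq T := lt_of_lt_of_le (by positivity) hs_geT
  have hs_nonneg : ∀ k, k ≤ T → 0 ≤ psum B.σsq k := by
    intro k hk
    exact Finset.sum_nonneg fun i hi => le_of_lt (lt_trans hδ0
      (B.σsq_mem i (Finset.mem_Icc.mp hi).1 (le_trans (Finset.mem_Icc.mp hi).2 hk)).1)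
  have hs_mono : ∀ k, k ≤ T → psum B.σsq k ≤ psum B.σsq T := by
    intro k hk
    exact Finset.sum_le_sum_of_subset_of_nonneg (Finset.Icc_subset_Icc_right hk)
      (fun i hi _ => le_of_lt (lt_trans hδ0
        (B.σsq_mem i (Finset.mem_Icc.mp hi).1 (Finset.mem_Icc.mp hi).2).1))
  -- gaussian marginals
  have hmap : ∀ k, k ≤ T → ∃ mv : ℝ × NNReal, P.map (B.S k) = gaussianReal mv.1 mv.2 := by
    intro k hk
    obtain ⟨mm, vv, h⟩ := B.gaussian_lin (fun i => if i = k then 1 else 0)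
    have hfun : (fun ω => ∑ i ∈ Finset.range (T+1), (if i = k then (1:ℝ) else 0) * B.S i ω)
        = B.S k := by
      funext ω
      rw [Finset.sum_eq_single k]
      · simp
      · intro i _ hik; simp [hik]
      · intro hk'; exact absurd (Finset.mem_range.mpr (Nat.lt_succ_of_le hk)) hk'
    rw [hfun] at h
    exact ⟨(mm, vv), h⟩
  have hInt : ∀ k, k ≤ T → Integrable (B.S k) P := by
    intro k hk
    obtain ⟨mv, h⟩ := hmap k hk
    exact integrable_of_map_gaussian (B.meas_S k) h
  have hIntSq : ∀ k, k ≤ T → ∀ c, Integrable (fun ω => (B.S k ω - c)^2) P := by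
    intro k hk c
    obtain ⟨mv, h⟩ := hmap k hk
    exact integrable_sq_sub_of_map_gaussian (B.meas_S k) h c
  -- means
  obtain ⟨μf, hμf⟩ : ∃ f : ℕ → ℝ, f = fun k => ∫ ω, B.S k ω ∂P := ⟨_, rfl⟩
  have hμk : ∀ k, (∫ ω, B.S k ω ∂P) = μf k := fun k => by rw [hμf]
  have hμ : ∀ k, 1 ≤ k → k ≤ r → |μf k - a| ≤ K * (m+1) ^ (1-δ) := by
    intro k hk1 hkr
    have hkT : k ≤ T := le_trans hkr hT
    have hmean := B.mean_S k hkT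
    rw [hμk k] at hmean
    have hknn := hs_nonneg k hkT
    have heq : μf k - a = (b - a) * (psum B.σsq k / psum B.σsq T) := by
      rw [hmean]; field_simp; ring
    have habs : |μf k - a| = |b - a| * (psum B.σsq k / psum B.σsq T) := by
      rw [heq, abs_mul, abs_of_nonneg (div_nonneg hknn (le_of_lt hs_posT))]
    have hdivle : psum B.σsq k / psum B.σsq T ≤ (δ⁻¹ * r) / (δ * T) := by
      apply div_le_div₀ (by positivity) ?_ (by positivity) hs_geT
      calc psum B.σsq k ≤ δ⁻¹ * k := hs_le k hkT
        _ ≤ δ⁻¹ * r := mul_le_mul_of_nonneg_left (by exact_mod_cast hkr) hδi.le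
    calc |μf k - a| = |b - a| * (psum B.σsq k / psum B.σsq T) := habs
      _ ≤ |b - a| * ((δ⁻¹ * r) / (δ * T)) := mul_le_mul_of_nonneg_left hdivle (abs_nonneg _)
      _ = K * (|b - a| * r / T) := by
          have hstep : δ⁻¹ * (r:ℝ) / (δ * T) = K * ((r:ℝ)/T) := by
            rw [hK]; field_simp
          rw [hstep]; ring
      _ ≤ K * (m+1) ^ (1-δ) := mul_le_mul_of_nonneg_left hb (le_of_lt hK0)
  -- variances
  have hVar : ∀ k, 1 ≤ k → k ≤ r → ∫ ω, (B.S k ω - μf k)^2 ∂P ≤ V := by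
    intro k hk1 hkr
    have hkT : k ≤ T := le_trans hkr hT
    have hc := B.cov_S k k le_rfl hkT
    simp only [hμk] at hc
    have hknn := hs_nonneg k hkT
    calc ∫ ω, (B.S k ω - μf k)^2 ∂P
        = ∫ ω, (B.S k ω - μf k) * (B.S k ω - μf k) ∂P := by simp only [pow_two]
      _ = psum B.σsq k * (psum B.σsq T - psum B.σsq k) / psum B.σsq T := hc
      _ ≤ psum B.σsq k := by
          rw [mul_div_assoc]
          apply mul_le_of_le_one_right hknn
          rw [div_le_one hs_posT]
          linarith
      _ ≤ δ⁻¹ * k := hs_le k hkT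
      _ ≤ V := by
          rw [hV]
          exact mul_le_mul_of_nonneg_left (by exact_mod_cast hkr) hδi.le
  -- events
  obtain ⟨E, hE⟩ : ∃ s : Set Ω,
      s = {ω' | ∀ k, 1 ≤ k → k ≤ r → B.S k ω' + B.D k ω' ≤ 0} := ⟨_, rfl⟩
  have hEmeas : MeasurableSet E := by
    have hEeq : E = ⋂ (k : ℕ), ⋂ (_ : 1 ≤ k), ⋂ (_ : k ≤ r), {ω | B.S k ω + B.D k ω ≤ 0} := by
      ext ω; simp [hE, Set.mem_iInter]
    rw [hEeq]
    exact MeasurableSet.iInter fun k => MeasurableSet.iInter fun _ =>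
      MeasurableSet.iInter fun _ =>
        measurableSet_le ((B.meas_S k).add (B.meas_D k)) measurable_const
  obtain ⟨SA, hSAdef⟩ : ∃ f : ℕ → Set Ω, f = fun k => {ω | m/4 ≤ |B.S k ω - μf k|} := ⟨_, rfl⟩
  obtain ⟨SB, hSBdef⟩ : ∃ f : ℕ → Set Ω, f = fun k =>
    {ω | δ⁻¹ * ((min k (T - k) : ℕ) : ℝ) ^ ((1:ℝ)/2 - δ) + m/4 < |B.D k ω|} := ⟨_, rfl⟩
  have hSAmeas : ∀ k, MeasurableSet (SA k) := fun k => by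
    rw [hSAdef]
    exact measurableSet_le measurable_const ((B.meas_S k).sub measurable_const).abs
  have hSBmeas : ∀ k, MeasurableSet (SB k) := fun k => by
    rw [hSBdef]
    exact measurableSet_lt measurable_const (B.meas_D k).abs
  have hm4 : (0:ℝ) < m/4 := by linarith
  have hSA : ∀ k, 1 ≤ k → k ≤ r → (P (SA k)).toReal ≤ 16*V/m^2 := by
    intro k hk1 hkr
    have hkT : k ≤ T := le_trans hkr hT
    have hint := hIntSq k hkT (μf k)
    have hind : Integrable (Set.indicator (SA k) (fun _ => (1:ℝ))) P :=
      (integrable_const 1).indicator (hSAmeas k)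
    have hmono : ∫ ω, Set.indicator (SA k) (fun _ => (1:ℝ)) ω ∂P
        ≤ ∫ ω, (B.S k ω - μf k)^2/(m/4)^2 ∂P := by
      refine integral_mono hind (hint.div_const _) fun ω => ?_
      by_cases hω : ω ∈ SA k
      · rw [Set.indicator_of_mem hω]
        have hωle : m/4 ≤ |B.S k ω - μf k| := by rw [hSAdef] at hω; exact hω
        have h1' : (m/4)^2 ≤ (B.S k ω - μf k)^2 := by
          calc (m/4)^2 ≤ |B.S k ω - μf k|^2 := pow_le_pow_left₀ hm4.le hωle 2
            _ = (B.S k ω - μf k)^2 := sq_abs _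
        rw [le_div_iff₀ (by positivity)]
        linarith
      · rw [Set.indicator_of_notMem hω]
        positivity
    rw [integral_indicator_const _ (hSAmeas k), smul_eq_mul, mul_one] at hmono
    rw [integral_div] at hmono
    calc (P (SA k)).toReal ≤ (∫ ω, (B.S k ω - μf k)^2 ∂P)/(m/4)^2 := hmono
      _ ≤ V/(m/4)^2 := by gcongr; exact hVar k hk1 hkr
      _ = 16*V/m^2 := by field_simp; ring
  have hSB : ∀ k, 1 ≤ k → k ≤ r → (P (SB k)).toReal ≤ δ⁻¹ * Real.exp (-(m/4) ^ δ) := by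
    intro k hk1 hkr
    simp only [hSBdef]
    exact B.dec_tail k hk1 (le_trans hkr hT) (m/4) hm4
  -- event inclusion
  have hsub : Eᶜ ⊆ ⋃ k ∈ Finset.Icc 1 r, (SA k ∪ SB k) := by
    intro ω hω
    simp only [hE, Set.mem_compl_iff, Set.mem_setOf_eq] at hω
    push_neg at hω
    obtain ⟨k, hk1, hkr, hpos⟩ := hω
    have hmem : ω ∈ SA k ∪ SB k := by
      by_contra hcon
      rw [Set.mem_union] at hcon
      push_neg at hcon
      obtain ⟨hA', hB'⟩ := hcon
      rw [hSAdef] at hA'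
      rw [hSBdef] at hB'
      simp only [Set.mem_setOf_eq, not_le] at hA'
      simp only [Set.mem_setOf_eq, not_lt] at hB'
      have hS : B.S k ω < μf k + m/4 := by
        have := (abs_lt.mp hA').2; linarith
      have hμa : μf k - a ≤ K * (m+1) ^ (1-δ) := le_trans (le_abs_self _) (hμ k hk1 hkr)
      have hrpow : ((min k (T - k) : ℕ) : ℝ) ^ ((1:ℝ)/2 - δ) ≤ (r:ℝ) := by
        have hbase : ((min k (T - k) : ℕ) : ℝ) ≤ (r:ℝ) := by
          exact_mod_cast le_trans (min_le_left _ _) hkr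
        have hbn : (0:ℝ) ≤ ((min k (T - k) : ℕ) : ℝ) := Nat.cast_nonneg _
        calc ((min k (T - k) : ℕ) : ℝ) ^ ((1:ℝ)/2 - δ) ≤ (r:ℝ) ^ ((1:ℝ)/2 - δ) :=
              Real.rpow_le_rpow hbn hbase (by linarith)
          _ ≤ (r:ℝ) ^ (1:ℝ) := Real.rpow_le_rpow_of_exponent_le (by exact_mod_cast hr)
              (by linarith)
          _ = (r:ℝ) := Real.rpow_one _
      have hD : B.D k ω ≤ m/4 + m/4 := by
        calc B.D k ω ≤ |B.D k ω| := le_abs_self _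
          _ ≤ δ⁻¹ * ((min k (T - k) : ℕ) : ℝ) ^ ((1:ℝ)/2 - δ) + m/4 := hB'
          _ ≤ δ⁻¹ * r + m/4 := by gcongr
          _ ≤ m/4 + m/4 := by linarith
      have : B.S k ω + B.D k ω < 0 := by linarith
      linarith
    exact Set.mem_iUnion₂.mpr ⟨k, Finset.mem_Icc.mpr ⟨hk1, hkr⟩, hmem⟩
  -- measure bound
  have hPEc : (P Eᶜ).toReal ≤ r * (16*V/m^2) + r * (δ⁻¹ * Real.exp (-(m/4) ^ δ)) := by
    have h0 : P Eᶜ ≤ ∑ k ∈ Finset.Icc 1 r, (P (SA k) + P (SB k)) :=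
      (measure_mono hsub).trans ((measure_biUnion_finset_le _ _).trans
        (Finset.sum_le_sum fun k _ => measure_union_le _ _))
    have hne : ∀ k ∈ Finset.Icc 1 r, P (SA k) + P (SB k) ≠ ⊤ := fun k _ =>
      ENNReal.add_ne_top.mpr ⟨measure_ne_top _ _, measure_ne_top _ _⟩
    have h1' : (P Eᶜ).toReal ≤ (∑ k ∈ Finset.Icc 1 r, (P (SA k) + P (SB k))).toReal :=
      ENNReal.toReal_mono (ENNReal.sum_lt_top.mpr fun k hk =>
        lt_top_iff_ne_top.mpr (hne k hk)).ne h0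
    rw [ENNReal.toReal_sum hne] at h1'
    calc (P Eᶜ).toReal ≤ ∑ k ∈ Finset.Icc 1 r, (P (SA k) + P (SB k)).toReal := h1'
      _ = ∑ k ∈ Finset.Icc 1 r, ((P (SA k)).toReal + (P (SB k)).toReal) :=
          Finset.sum_congr rfl fun k _ =>
            ENNReal.toReal_add (measure_ne_top _ _) (measure_ne_top _ _)
      _ ≤ ∑ _k ∈ Finset.Icc 1 r, (16*V/m^2 + δ⁻¹ * Real.exp (-(m/4) ^ δ)) :=
          Finset.sum_le_sum fun k hk =>
            add_le_add (hSA k (Finset.mem_Icc.mp hk).1 (Finset.mem_Icc.mp hk).2)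
              (hSB k (Finset.mem_Icc.mp hk).1 (Finset.mem_Icc.mp hk).2)
      _ = r * (16*V/m^2) + r * (δ⁻¹ * Real.exp (-(m/4) ^ δ)) := by
          rw [Finset.sum_const, Nat.card_Icc, nsmul_eq_mul]
          push_cast
          ring
  -- second moment of S r - a
  obtain ⟨c, hc⟩ : ∃ x : ℝ, x = (m+1) ^ (1-δ) := ⟨_, rfl⟩
  rw [← hc] at h3 h4
  have hc1 : 1 ≤ c := by
    rw [hc]
    calc (1:ℝ) = (1:ℝ) ^ (1-δ) := (Real.one_rpow _).symm
      _ ≤ (m+1) ^ (1-δ) := Real.rpow_le_rpow zero_le_one (by linarith) (by linarith)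
  have hc0 : 0 < c := lt_of_lt_of_le one_pos hc1
  have hzero : ∫ ω, (B.S r ω - μf r) ∂P = 0 := by
    rw [integral_sub (hInt r hT) (integrable_const _), integral_const, hμk r]
    simp
  have hQ : ∫ ω, (B.S r ω - a)^2 ∂P
      = (∫ ω, (B.S r ω - μf r)^2 ∂P) + (μf r - a)^2 := by
    have hi1 := hIntSq r hT (μf r)
    have hi2 : Integrable (fun ω => 2*(μf r - a)*(B.S r ω - μf r)) P :=
      ((hInt r hT).sub (integrable_const _)).const_mul _
    have hi23 : Integrable (fun ω => 2*(μf r - a)*(B.S r ω - μf r) + (μf r - a)^2) P :=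
      hi2.add (integrable_const _)
    have hsplit : ∫ ω, (B.S r ω - a)^2 ∂P
        = (∫ ω, (B.S r ω - μf r)^2 ∂P)
          + ∫ ω, (2*(μf r - a)*(B.S r ω - μf r) + (μf r - a)^2) ∂P := by
      rw [← integral_add hi1 hi23]
      exact integral_congr_ae (ae_of_all _ fun ω => by ring)
    rw [hsplit, integral_add hi2 (integrable_const _), integral_const_mul, hzero,
      integral_const]
    simp
  have hμra : |μf r - a| ≤ K * c := by rw [hc]; exact hμ r hr le_rfl
  have hQle : ∫ ω, (B.S r ω - a)^2 ∂P ≤ V + (K*c)^2 := by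
    rw [hQ]
    refine add_le_add (hVar r hr le_rfl) ?_
    have := abs_le.mp hμra
    exact sq_le_sq' (by linarith) (by linarith)
  have hEabs : ∫ ω, |B.S r ω - a| ∂P ≤ V + (K*K+1)*c := by
    have habs_int : Integrable (fun ω => |B.S r ω - a|) P :=
      ((hInt r hT).sub (integrable_const a)).abs
    have hup : Integrable (fun ω => ((B.S r ω - a)^2 + c^2)/(2*c)) P :=
      ((hIntSq r hT a).add (integrable_const _)).div_const _
    have h2c : (0:ℝ) < 2*c := by linarith
    have hmono : ∫ ω, |B.S r ω - a| ∂P ≤ ∫ ω, ((B.S r ω - a)^2 + c^2)/(2*c) ∂P := by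
      refine integral_mono habs_int hup fun ω => ?_
      rw [le_div_iff₀ h2c]
      nlinarith [sq_nonneg (|B.S r ω - a| - c), sq_abs (B.S r ω - a),
        abs_nonneg (B.S r ω - a)]
    rw [integral_div, integral_add (hIntSq r hT a) (integrable_const _), integral_const] at hmono
    simp only [probReal_univ, one_smul] at hmono
    calc ∫ ω, |B.S r ω - a| ∂P ≤ ((∫ ω, (B.S r ω - a)^2 ∂P) + c^2)/(2*c) := hmono
      _ ≤ ((V + (K*c)^2) + c^2)/(2*c) :=
          (div_le_div_iff_of_pos_right h2c).mpr (by linarith)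
      _ ≤ V + (K*K+1)*c := by
          rw [div_le_iff₀ h2c]
          nlinarith [mul_nonneg hV0.le (sub_nonneg.mpr hc1), sq_nonneg c, hK0.le,
            mul_nonneg (mul_nonneg hK0.le hK0.le) (mul_nonneg hc0.le hc0.le)]
  -- integrability of the main integrand
  have hf_meas : Measurable (fun ω => nneg (B.S r ω) * Set.indicator E (fun _ => (1:ℝ)) ω) := by
    have h1' : Measurable (fun ω => max (-(B.S r ω)) 0) :=
      (B.meas_S r).neg.max measurable_const
    exact h1'.mul (measurable_const.indicator hEmeas)
  have hfInt : Integrable (fun ω => nneg (B.S r ω) * Set.indicator E (fun _ => (1:ℝ)) ω) P := by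
    refine Integrable.mono' ((hInt r hT).abs) hf_meas.aestronglyMeasurable
      (ae_of_all _ fun ω => ?_)
    rw [Real.norm_eq_abs, abs_mul]
    have h1' : |nneg (B.S r ω)| = nneg (B.S r ω) := abs_of_nonneg (le_max_right _ _)
    have h2' : |Set.indicator E (fun _ => (1:ℝ)) ω| ≤ 1 := by
      by_cases h : ω ∈ E <;> simp [h]
    calc |nneg (B.S r ω)| * |Set.indicator E (fun _ => (1:ℝ)) ω|
        ≤ |nneg (B.S r ω)| * 1 := mul_le_mul_of_nonneg_left h2' (abs_nonneg _)
      _ = nneg (B.S r ω) := by rw [mul_one, h1']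
      _ ≤ |B.S r ω| := max_le (neg_le_abs _) (abs_nonneg _)
  -- main estimate
  have hSa : Integrable (fun ω => B.S r ω - a) P := (hInt r hT).sub (integrable_const a)
  have hSa_abs : Integrable (fun ω => |B.S r ω - a|) P := hSa.abs
  have hterm1 : Integrable (fun ω => 2 * |B.S r ω - a|) P := hSa_abs.const_mul 2
  have hterm2 : Integrable (fun ω => m * Set.indicator Eᶜ (fun _ => (1:ℝ)) ω) P :=
    ((integrable_const (1:ℝ)).indicator hEmeas.compl).const_mul m
  have hg_int : Integrable (fun ω => 2*|B.S r ω - a| + m * Set.indicator Eᶜ (fun _ => (1:ℝ)) ω) P :=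
    hterm1.add hterm2
  have hkey : |B.ell r - m| ≤ 2*(∫ ω, |B.S r ω - a| ∂P) + m * (P Eᶜ).toReal := by
    have hellval : B.ell r - m
        = ∫ ω, (nneg (B.S r ω) * Set.indicator E (fun _ => (1:ℝ)) ω - m) ∂P := by
      rw [integral_sub hfInt (integrable_const _), integral_const]
      simp only [probReal_univ, one_smul]
      rw [DecoratedBridge.ell, ← hE]
    rw [hellval]
    calc |∫ ω, (nneg (B.S r ω) * Set.indicator E (fun _ => (1:ℝ)) ω - m) ∂P|
        = ‖∫ ω, (nneg (B.S r ω) * Set.indicator E (fun _ => (1:ℝ)) ω - m) ∂P‖ :=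
          (Real.norm_eq_abs _).symm
      _ ≤ ∫ ω, ‖nneg (B.S r ω) * Set.indicator E (fun _ => (1:ℝ)) ω - m‖ ∂P :=
          norm_integral_le_integral_norm _
      _ = ∫ ω, |nneg (B.S r ω) * Set.indicator E (fun _ => (1:ℝ)) ω - m| ∂P := by
          simp only [Real.norm_eq_abs]
      _ ≤ ∫ ω, (2*|B.S r ω - a| + m * Set.indicator Eᶜ (fun _ => (1:ℝ)) ω) ∂P := by
          refine integral_mono ((hfInt.sub (integrable_const m)).abs) hg_int fun ω => ?_
          by_cases hω : ω ∈ E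
          · rw [Set.indicator_of_mem hω, Set.indicator_of_notMem (by simpa using hω)]
            have hlip : |nneg (B.S r ω) - nneg a| ≤ |B.S r ω - a| := by
              have h' := abs_max_sub_max_le_abs (-(B.S r ω)) (-a) 0
              rw [show -(B.S r ω) - -a = -(B.S r ω - a) by ring, abs_neg] at h'
              exact h'
            rw [hnneg_a] at hlip
            rw [mul_one, mul_zero, add_zero]
            linarith [abs_nonneg (B.S r ω - a)]
          · rw [Set.indicator_of_notMem hω, Set.indicator_of_mem (by simpa using hω)]
            rw [mul_zero, mul_one, zero_sub, abs_neg, abs_of_pos hm0]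
            linarith [abs_nonneg (B.S r ω - a)]
      _ = 2*(∫ ω, |B.S r ω - a| ∂P) + m * (P Eᶜ).toReal := by
          rw [integral_add hterm1 hterm2, integral_const_mul, integral_const_mul,
            integral_indicator_const _ hEmeas.compl, smul_eq_mul, mul_one]
          rfl
  -- conclusion
  have h4' : 2*(V + (K*K+1)*c) ≤ ε/3 * m := by
    rw [div_le_iff₀ hm0] at h4
    linarith
  have h5' : r * (16*V) ≤ ε/3 * m^2 := by
    rw [div_le_iff₀ (by positivity)] at h5
    linarith
  have t1 : m * (r * (16*V/m^2)) = r*(16*V)/m := by field_simp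
  have t2 : r*(16*V)/m ≤ ε/3 * m := by
    rw [div_le_iff₀ hm0]
    nlinarith
  have t3 : m * (r * (δ⁻¹ * Real.exp (-(m/4) ^ δ))) ≤ ε/3 * m := by
    nlinarith [mul_le_mul_of_nonneg_left h6 hm0.le]
  have hfin : |B.ell r - m| ≤ ε * m := by
    calc |B.ell r - m| ≤ 2*(∫ ω, |B.S r ω - a| ∂P) + m * (P Eᶜ).toReal := hkey
      _ ≤ 2*(V + (K*K+1)*c) + m * (r * (16*V/m^2) + r * (δ⁻¹ * Real.exp (-(m/4) ^ δ))) := by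
          gcongr
      _ = 2*(V + (K*K+1)*c) + (m * (r * (16*V/m^2))
          + m * (r * (δ⁻¹ * Real.exp (-(m/4) ^ δ)))) := by ring
      _ ≤ ε/3 * m + (ε/3 * m + ε/3 * m) := by
          rw [t1]
          exact add_le_add h4' (add_le_add t2 t3)
      _ = ε * m := by ring
  have : B.ell r / m - 1 = (B.ell r - m)/m := by field_simp
  rw [this, abs_div, abs_of_pos hm0, div_le_iff₀ hm0]
  linarith


end
end

section
/- Let g := 2/π and for a real ℓ ≥ 0 set m_ℓ := 2·√g·ℓ − (3/4)·√g·log⁺ ℓ, where log⁺ x := max(log x, 0). For reals 0 ≤ k < ℓ < n define the linear interpolation m̂_ℓ := ((ℓ − k)·m_n + (n − ℓ)·m_k)/(n − k). Then for all reals 0 ≤ k < ℓ < n < ∞ one has −2·√g ≤ m̂_ℓ − m_ℓ ≤ (3/2)·√g·log⁺( min(ℓ − k, n − ℓ) ) + (3/2)·√g. -/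
noncomputable section

lemma L_nonneg (x : ℝ) : 0 ≤ max (Real.log x) 0 := le_max_right _ _

lemma L_mono {a b : ℝ} (ha : 0 ≤ a) (hab : a ≤ b) :
    max (Real.log a) 0 ≤ max (Real.log b) 0 := by
  rcases le_or_gt a 1 with h | h
  · have hla : Real.log a ≤ 0 := by
      rcases eq_or_lt_of_le ha with h0 | h0
      · simp [← h0]
      · exact Real.log_nonpos h0.le h
    exact max_le (hla.trans (L_nonneg b)) (L_nonneg b)
  · have hl : Real.log a ≤ Real.log b := Real.log_le_log (by linarith) hab
    exact max_le_max hl le_rfl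

lemma L_diff_le {a b : ℝ} (ha : 0 ≤ a) (hab : a ≤ b) :
    max (Real.log b) 0 ≤ max (Real.log a) 0 + (b - a) / max a 1 := by
  have ha1 : (0:ℝ) < max a 1 := lt_of_lt_of_le one_pos (le_max_right a 1)
  have hdiv : 0 ≤ (b - a) / max a 1 := div_nonneg (by linarith) ha1.le
  rcases le_or_gt b 1 with h | h
  · have hlb : Real.log b ≤ 0 := by
      rcases eq_or_lt_of_le (ha.trans hab) with h0 | h0
      · simp [← h0]
      · exact Real.log_nonpos h0.le h
    rw [max_eq_right hlb]
    have := L_nonneg a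
    linarith
  · have hb : 0 < b := lt_trans one_pos h
    rw [max_eq_left (Real.log_nonneg h.le)]
    rcases le_or_gt a 1 with h1 | h1
    · rw [max_eq_right h1]
      have h2 : Real.log b ≤ b - 1 := Real.log_le_sub_one_of_pos hb
      have := L_nonneg a
      rw [div_one]
      linarith
    · have ha0 : 0 < a := lt_trans one_pos h1
      rw [max_eq_left h1.le, max_eq_left (Real.log_nonneg h1.le)]
      have h2 : Real.log (b / a) ≤ b / a - 1 := Real.log_le_sub_one_of_pos (by positivity)
      rw [Real.log_div hb.ne' ha0.ne'] at h2
      have h3 : b / a - 1 = (b - a) / a := by field_simp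
      linarith [h3 ▸ h2]

lemma L_add_le_aux {a b : ℝ} (ha : 0 ≤ a) (hab : a ≤ b) :
    max (Real.log (a + b)) 0 ≤ max (Real.log a) 0 + max (Real.log b) 0 + Real.log 2 := by
  have hlog2 : 0 ≤ Real.log 2 := Real.log_nonneg (by norm_num)
  have hLa := L_nonneg a
  have hLb := L_nonneg b
  rcases le_or_gt (a + b) 1 with h | h
  · have hlab : Real.log (a + b) ≤ 0 := by
      rcases eq_or_lt_of_le (by linarith : (0:ℝ) ≤ a + b) with h0 | h0
      · simp [← h0]
      · exact Real.log_nonpos h0.le h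
    rw [max_eq_right hlab]
    linarith
  · have hb0 : 0 < b := by linarith
    have h1 : Real.log (a + b) ≤ Real.log (2 * b) :=
      Real.log_le_log (by linarith) (by linarith)
    rw [Real.log_mul (by norm_num) hb0.ne'] at h1
    have h2 : Real.log b ≤ max (Real.log b) 0 := le_max_left _ _
    have h3 : max (Real.log (a + b)) 0 ≤ Real.log 2 + max (Real.log b) 0 :=
      max_le (by linarith) (by linarith)
    linarith

lemma L_add_le {a b : ℝ} (ha : 0 ≤ a) (hb : 0 ≤ b) :
    max (Real.log (a + b)) 0 ≤ max (Real.log a) 0 + max (Real.log b) 0 + Real.log 2 := by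
  rcases le_total a b with h | h
  · exact L_add_le_aux ha h
  · have := L_add_le_aux hb h
    rw [add_comm b a] at this
    linarith

/-- Pure arithmetic: lower bound core. -/
lemma arith_low (k ℓ n Lk Ll Ln P : ℝ) (hk : 0 ≤ k) (hkl : k < ℓ) (hln : ℓ < n)
    (hP1 : ℓ ≤ P) (hP2 : 0 < P) (hkLl : Lk ≤ Ll) (hLnP : Ln * P ≤ Ll * P + (n - ℓ)) :
    ((ℓ - k) * Ln + (n - ℓ) * Lk) / (n - k) ≤ Ll + 1 := by
  have hnk : (0:ℝ) < n - k := by linarith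
  rw [div_le_iff₀ hnk]
  have h1 : (ℓ - k) * Ln ≤ (ℓ - k) * Ll + (n - k) := by
    have h := mul_le_mul_of_nonneg_left hLnP (by linarith : (0:ℝ) ≤ ℓ - k)
    have h6 : (ℓ - k) * (n - ℓ) ≤ (n - k) * P := by nlinarith
    nlinarith
  have h2 : (n - ℓ) * Lk ≤ (n - ℓ) * Ll :=
    mul_le_mul_of_nonneg_left hkLl (by linarith)
  linarith

/-- `m ℓ = 2·√g·ℓ − (3/4)·√g·log⁺ ℓ` with `g = 2/π` (here `log⁺ x = max (log x) 0`,
which equals `0` at `x = 0` since `Real.log 0 = 0`). -/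
def mfun (x : ℝ) : ℝ :=
  2 * Real.sqrt (2 / Real.pi) * x - 3 / 4 * Real.sqrt (2 / Real.pi) * max (Real.log x) 0

/-- bounds on the difference between the linear interpolation
`m̂_ℓ = ((ℓ−k)·m_n + (n−ℓ)·m_k)/(n−k)` and `m_ℓ`. -/
theorem mhat_sub_m_bounds (k ℓ n : ℝ) (hk : 0 ≤ k) (hkl : k < ℓ) (hln : ℓ < n) :
    -(2 * Real.sqrt (2 / Real.pi))
        ≤ ((ℓ - k) * mfun n + (n - ℓ) * mfun k) / (n - k) - mfun ℓ ∧
      ((ℓ - k) * mfun n + (n - ℓ) * mfun k) / (n - k) - mfun ℓ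
        ≤ 3 / 2 * Real.sqrt (2 / Real.pi) * max (Real.log (min (ℓ - k) (n - ℓ))) 0
          + 3 / 2 * Real.sqrt (2 / Real.pi) := by
  have hc : 0 ≤ Real.sqrt (2 / Real.pi) := Real.sqrt_nonneg _
  set c := Real.sqrt (2 / Real.pi) with hcdef
  have hnk : (0:ℝ) < n - k := by linarith
  have hu : (0:ℝ) < ℓ - k := by linarith
  have ht : (0:ℝ) < n - ℓ := by linarith
  set Lk := max (Real.log k) 0 with hLkdef
  set Ll := max (Real.log ℓ) 0 with hLldef
  set Ln := max (Real.log n) 0 with hLndef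
  set Ls := max (Real.log (min (ℓ - k) (n - ℓ))) 0 with hLsdef
  have hLs : 0 ≤ Ls := le_max_right _ _
  have key : ((ℓ - k) * mfun n + (n - ℓ) * mfun k) / (n - k) - mfun ℓ
      = 3 / 4 * c * (Ll - ((ℓ - k) * Ln + (n - ℓ) * Lk) / (n - k)) := by
    simp only [mfun, ← hcdef, ← hLkdef, ← hLldef, ← hLndef]
    field_simp
    ring
  have hmono_kl : Lk ≤ Ll := L_mono hk hkl.le
  have hmono_ln : Ll ≤ Ln := L_mono (by linarith) hln.le
  have hml : (0:ℝ) < max ℓ 1 := lt_of_lt_of_le one_pos (le_max_right _ _)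
  have hmk : (1:ℝ) ≤ max k 1 := le_max_right _ _
  have hmk0 : (0:ℝ) < max k 1 := by linarith
  have hlog2 : 0 ≤ Real.log 2 := Real.log_nonneg (by norm_num)
  have hlog2' : Real.log 2 ≤ 1 := by
    have := Real.log_le_sub_one_of_pos (by norm_num : (0:ℝ) < 2)
    linarith
  have hadd : Ll ≤ Lk + max (Real.log (ℓ - k)) 0 + Real.log 2 := by
    have h := L_add_le hk hu.le
    rw [show k + (ℓ - k) = ℓ by ring] at h
    exact h
  -- lower bound on D
  have hD1 : -1 ≤ Ll - ((ℓ - k) * Ln + (n - ℓ) * Lk) / (n - k) := by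
    have hdiff_ln : Ln ≤ Ll + (n - ℓ) / max ℓ 1 := L_diff_le (by linarith) hln.le
    have hLnP : Ln * max ℓ 1 ≤ Ll * max ℓ 1 + (n - ℓ) := by
      have h := mul_le_mul_of_nonneg_right hdiff_ln hml.le
      rw [add_mul, div_mul_cancel₀ _ hml.ne'] at h
      exact h
    have := arith_low k ℓ n Lk Ll Ln (max ℓ 1) hk hkl hln (le_max_left _ _) hml hmono_kl hLnP
    linarith
  -- upper bound on D
  have hD2 : Ll - ((ℓ - k) * Ln + (n - ℓ) * Lk) / (n - k) ≤ 2 * Ls + 2 := by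
    have hd0 : 0 ≤ Ll - Lk := by linarith
    have hdu : Ll - Lk ≤ ℓ - k := by
      have hdiff_kl : Ll ≤ Lk + (ℓ - k) / max k 1 := L_diff_le hk hkl.le
      have : (ℓ - k) / max k 1 ≤ ℓ - k := div_le_self hu.le hmk
      linarith
    have hcore : (n - ℓ) * (Ll - Lk) ≤ (2 * Ls + 2) * (n - k) := by
      rcases le_total (ℓ - k) (n - ℓ) with hmin | hmin
      · -- s = ℓ - k
        have hLsval : max (Real.log (ℓ - k)) 0 ≤ Ls := by
          rw [hLsdef, min_eq_left hmin]
        have hx : Ll - Lk ≤ max (Real.log (ℓ - k)) 0 + 1 := by linarith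
        have hy := mul_le_mul_of_nonneg_left hx ht.le
        have hw := mul_le_mul_of_nonneg_left hLsval ht.le
        have hz : 0 ≤ (n + ℓ - 2 * k) * Ls := mul_nonneg (by linarith) hLs
        linarith
      · -- s = n - ℓ
        have hLsval : Ls = max (Real.log (n - ℓ)) 0 := by
          rw [hLsdef, min_eq_right hmin]
        rcases le_or_gt (n - ℓ) 2 with h2 | h2
        · have hy := mul_le_mul_of_nonneg_left hdu ht.le
          have hw := mul_le_mul_of_nonneg_right h2 hu.le
          have hz : 0 ≤ (n - k) * Ls := mul_nonneg hnk.le hLs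
          linarith
        · have ht1 : (1:ℝ) < n - ℓ := by linarith
          have hu1 : (1:ℝ) < ℓ - k := by linarith
          have hlt : 0 < Real.log (n - ℓ) := Real.log_pos ht1
          have hLt : Ls = Real.log (n - ℓ) := by
            rw [hLsval]; exact max_eq_left hlt.le
          have hLu : max (Real.log (ℓ - k)) 0 = Real.log (ℓ - k) :=
            max_eq_left (Real.log_pos hu1).le
          have hl2t : Real.log 2 ≤ Real.log (n - ℓ) :=
            Real.log_le_log (by norm_num) (by linarith)
          have htan : Real.log ((2 * (ℓ - k)) / (4 * (n - ℓ)))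
              ≤ (2 * (ℓ - k)) / (4 * (n - ℓ)) - 1 :=
            Real.log_le_sub_one_of_pos (by positivity)
          have hq : (2 * (ℓ - k)) / (4 * (n - ℓ)) = (ℓ - k) / (2 * (n - ℓ)) := by
            rw [div_eq_div_iff (by positivity) (by positivity)]; ring
          rw [hq, Real.log_div (by positivity) (by positivity),
            Real.log_mul (by norm_num) (by positivity)] at htan
          have hd_ub : Ll - Lk
              ≤ (ℓ - k) / (2 * (n - ℓ)) - 1 + 2 * Real.log 2 + Real.log (n - ℓ) := by
            rw [hLu] at hadd
            linarith
          have hmul := mul_le_mul_of_nonneg_left hd_ub ht.le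
          have hre : (n - ℓ) * ((ℓ - k) / (2 * (n - ℓ)) - 1 + 2 * Real.log 2
                + Real.log (n - ℓ))
              = (ℓ - k) / 2 - (n - ℓ) + 2 * (n - ℓ) * Real.log 2
                + (n - ℓ) * Real.log (n - ℓ) := by
            field_simp
          rw [hre] at hmul
          have hA := mul_le_mul_of_nonneg_left hl2t (by linarith : (0:ℝ) ≤ 2 * (n - ℓ))
          have hB := mul_le_mul_of_nonneg_right hmin hlt.le
          have hC : 0 ≤ (ℓ - k) * Real.log (n - ℓ) := by positivity
          have hC' : 0 ≤ (n - ℓ) * Real.log (n - ℓ) := by positivity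
          rw [hLt]
          linarith
    have hstep : Ll - ((ℓ - k) * Ln + (n - ℓ) * Lk) / (n - k)
        ≤ (n - ℓ) * (Ll - Lk) / (n - k) := by
      rw [sub_le_iff_le_add, ← add_div, le_div_iff₀ hnk]
      have h := mul_le_mul_of_nonneg_left hmono_ln hu.le
      linarith
    have hfin : (n - ℓ) * (Ll - Lk) / (n - k) ≤ 2 * Ls + 2 := by
      rw [div_le_iff₀ hnk]
      exact hcore
    linarith
  rw [key]
  constructor
  · have h := mul_le_mul_of_nonneg_left hD1 (by positivity : (0:ℝ) ≤ 3 / 4 * c)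
    linarith
  · have h := mul_le_mul_of_nonneg_left hD2 (by positivity : (0:ℝ) ≤ 3 / 4 * c)
    linarith

end
end
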